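/- Let B be a standard Brownian motion started at 0. For every ε > 0, ∫∫_{0 < x < y < 2π} P(∃ s ∈ [0, 2ε], (y − x) + B_s ∈ {0, 2π}) dx dy ≤ 8 √π · √ε. -/

import Mathlib

open MeasureTheory ProbabilityTheory Real

/-- A process indexed by `ℝ` has independent increments (along nonnegative times) if for every
monotone sequence of nonnegative times, the corresponding increments form an independent
family of random variables. -/
def HasIndepIncrements {Ω : Type*} [MeasurableSpace Ω] (P : Measure Ω)
    (B : ℝ → Ω → ℝ) : Prop :=
  ∀ t : ℕ → ℝ, Monotone t → 0 ≤ t 0 →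
    iIndepFun (fun n ω => B (t (n + 1)) ω - B (t n) ω) P

/-- A standard Brownian motion started at `0`: it vanishes at time `0` almost surely, has almost
surely continuous paths on `[0, ∞)`, its increments over `[s, t]` (for `0 ≤ s ≤ t`) are centered
Gaussian with variance `t - s`, and it has independent increments. -/
def IsStandardBrownianMotion {Ω : Type*} [MeasurableSpace Ω] (P : Measure Ω)
    (B : ℝ → Ω → ℝ) : Prop :=
  (∀ᵐ ω ∂P, B 0 ω = 0) ∧
  (∀ᵐ ω ∂P, ContinuousOn (fun t => B t ω) (Set.Ici 0)) ∧
  (∀ s t : ℝ, 0 ≤ s → s ≤ t →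
    P.map (fun ω => B t ω - B s ω) = gaussianReal 0 (t - s).toNNReal) ∧
  HasIndepIncrements P B

section Auxiliary

open Set Filter
open scoped NNReal ENNReal

variable {Ω : Type*} [MeasurableSpace Ω]

/-- If the law of a function is a Gaussian, then the function is a.e.-measurable. -/
private lemma aemeasurable_of_map_gaussian {P : Measure Ω} {f : Ω → ℝ} {m : ℝ} {v : ℝ≥0}
    (h : P.map f = gaussianReal m v) : AEMeasurable f P := by
  by_contra hf
  have h1 : (gaussianReal m v) Set.univ = 1 := measure_univ
  rw [← h, Measure.map_of_not_aemeasurable hf] at h1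
  simp at h1

/-- `iIndepFun` is stable under a.e. modification of the functions. -/
private lemma iIndepFun_congr_ae {ι : Type*} {P : Measure Ω}
    {f g : ι → Ω → ℝ} (h : iIndepFun f P)
    (hfg : ∀ i, f i =ᵐ[P] g i) : iIndepFun g P := by
  rw [iIndepFun_iff_measure_inter_preimage_eq_mul] at h ⊢
  intro S sets hsets
  have h1 : ∀ i : ι, (f i ⁻¹' sets i : Set Ω) =ᵐ[P] (g i ⁻¹' sets i : Set Ω) := by
    intro i
    filter_upwards [hfg i] with ω hω
    show (f i ω ∈ sets i) = (g i ω ∈ sets i)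
    rw [hω]
  have h2 : ((⋂ i ∈ S, f i ⁻¹' sets i : Set Ω)) =ᵐ[P] ((⋂ i ∈ S, g i ⁻¹' sets i : Set Ω)) := by
    have hS : ∀ᵐ ω ∂P, ∀ i ∈ S, f i ω = g i ω :=
      (MeasureTheory.ae_ball_iff S.countable_toSet).2 fun i _ => hfg i
    filter_upwards [hS] with ω hω
    show (ω ∈ ⋂ i ∈ S, f i ⁻¹' sets i) = (ω ∈ ⋂ i ∈ S, g i ⁻¹' sets i)
    simp only [Set.mem_iInter, Set.mem_preimage, eq_iff_iff]
    constructor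
    · intro hmem i hi
      rw [← hω i hi]; exact hmem i hi
    · intro hmem i hi
      rw [hω i hi]; exact hmem i hi
  rw [← measure_congr h2, h S hsets]
  exact Finset.prod_congr rfl fun i _ => measure_congr (h1 i)

private lemma gaussian_map_neg (v : ℝ≥0) :
    (gaussianReal 0 v).map (fun x => -x) = gaussianReal 0 v := by
  have h := gaussianReal_map_const_mul (μ := 0) (v := v) (-1)
  simp only [neg_one_mul, mul_zero] at h
  convert h using 2
  ext
  simp

private lemma gaussian_Iio_le_Ici (v : ℝ≥0) :
    gaussianReal 0 v {x | x < 0} ≤ gaussianReal 0 v {x | 0 ≤ x} := by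
  have h1 : gaussianReal 0 v {x | x < 0} = gaussianReal 0 v {x | 0 < x} := by
    conv_lhs => rw [← gaussian_map_neg v]
    rw [Measure.map_apply measurable_neg (by exact measurableSet_Iio)]
    congr 1
    ext x
    simp [Set.mem_preimage, neg_lt_zero]
  rw [h1]
  exact measure_mono fun x (hx : (0:ℝ) < x) => (le_of_lt hx : (0:ℝ) ≤ x)

/-- Discrete reflection bound: for independent symmetric increments, the probability that
some partial sum reaches level `a > 0` is at most twice the probability that the final sum
is at least `a`. -/
private lemma discrete_reflection (P : Measure Ω) [IsProbabilityMeasure P] {Y : ℕ → Ω → ℝ}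
    (hYm : ∀ i, Measurable (Y i))
    (hind : iIndepFun Y P) (N : ℕ)
    (hsym : ∀ k : ℕ, k ≤ N →
      P {ω | (∑ j ∈ Finset.Ico k N, Y j ω) < 0} ≤ P {ω | 0 ≤ ∑ j ∈ Finset.Ico k N, Y j ω})
    {a : ℝ} (ha : 0 < a) :
    P {ω | ∃ k ≤ N, a ≤ ∑ j ∈ Finset.range k, Y j ω}
      ≤ 2 * P {ω | a ≤ ∑ j ∈ Finset.range N, Y j ω} := by
  classical
  set S : ℕ → Ω → ℝ := fun k ω => ∑ j ∈ Finset.range k, Y j ω with hSdef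
  have hSm : ∀ k, Measurable (S k) := fun k => Finset.measurable_sum _ fun i _ => hYm i
  set A : ℕ → Set Ω := fun k => {ω | a ≤ S k ω ∧ ∀ j < k, S j ω < a} with hAdef
  have hAm : ∀ k, MeasurableSet (A k) := by
    intro k
    have hEq : A k = {ω | a ≤ S k ω} ∩ ⋂ j ∈ Finset.range k, {ω | S j ω < a} := by
      ext ω
      simp only [hAdef, Set.mem_setOf_eq, Set.mem_inter_iff, Set.mem_iInter, Finset.mem_range]
    rw [hEq]
    exact (measurableSet_le measurable_const (hSm k)).inter
      (MeasurableSet.biInter (Finset.range k).countable_toSet fun j _ =>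
        measurableSet_lt (hSm j) measurable_const)
  set F : Set Ω := {ω | a ≤ S N ω} with hFdef
  have hFm : MeasurableSet F := measurableSet_le measurable_const (hSm N)
  have hcover : {ω | ∃ k ≤ N, a ≤ S k ω} ⊆ ⋃ k ∈ Finset.range (N + 1), A k := by
    rintro ω ⟨k, hkN, hk⟩
    have hex : ∃ m, a ≤ S m ω := ⟨k, hk⟩
    have hfind := Nat.find_spec hex
    have hmin := fun j (hj : j < Nat.find hex) => Nat.find_min hex hj
    exact Set.mem_iUnion₂.2 ⟨Nat.find hex,
      Finset.mem_range.2 (Nat.lt_succ_of_le (le_trans (Nat.find_min' hex hk) hkN)),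
      hfind, fun j hj => not_le.1 (hmin j hj)⟩
  have hdisj' : ∀ k l, k < l → Disjoint (A k) (A l) := fun k l h =>
    Set.disjoint_left.2 fun ω hωk hωl => absurd hωk.1 (not_le.2 (hωl.2 k h))
  have hdisj : (↑(Finset.range (N + 1)) : Set ℕ).PairwiseDisjoint A := by
    intro k _ l _ hkl
    rcases lt_or_gt_of_ne hkl with h | h
    · exact hdisj' k l h
    · exact (hdisj' l k h).symm
  have key : ∀ k, k ≤ N → P (A k) ≤ 2 * P (A k ∩ F) := by
    intro k hkN
    set Δ : Ω → ℝ := fun ω => ∑ j ∈ Finset.Ico k N, Y j ω with hΔdef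
    have hΔm : Measurable Δ := Finset.measurable_sum _ fun i _ => hYm i
    have hSN : ∀ ω, S N ω = S k ω + Δ ω := by
      intro ω
      rw [hSdef, hΔdef]
      exact (Finset.sum_range_add_sum_Ico _ hkN).symm
    have hdisjST : Disjoint (Finset.range k) (Finset.Ico k N) := by
      rw [Finset.disjoint_left]
      intro i hi hi'
      simp only [Finset.mem_range] at hi
      simp only [Finset.mem_Ico] at hi'
      omega
    have hind2 := hind.indepFun_finset (Finset.range k) (Finset.Ico k N) hdisjST hYm
    -- express `A k` as a preimage of the first-block variables
    set V : Ω → ({i // i ∈ Finset.range k} → ℝ) := fun ω i => Y i ω with hVdef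
    set W : Ω → ({i // i ∈ Finset.Ico k N} → ℝ) := fun ω i => Y i ω with hWdef
    have hsum1 : ∀ ω, (∑ i, V ω i) = S k ω := by
      intro ω
      rw [hVdef, hSdef]
      exact Finset.sum_coe_sort (Finset.range k) (fun n => Y n ω)
    have hsum2 : ∀ j, j < k → ∀ ω,
        (∑ i : {i // i ∈ Finset.range k}, if (i : ℕ) < j then V ω i else 0) = S j ω := by
      intro j hj ω
      have h1 : (∑ i : {i // i ∈ Finset.range k}, if (i : ℕ) < j then V ω i else 0)
          = ∑ i ∈ Finset.range k, (if i < j then Y i ω else 0) :=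
        Finset.sum_coe_sort (Finset.range k) (fun n => if n < j then Y n ω else 0)
      have h2 : (∑ i ∈ Finset.range k, if i < j then Y i ω else 0)
          = ∑ i ∈ (Finset.range k).filter (· < j), Y i ω := (Finset.sum_filter _ _).symm
      have h3 : (Finset.range k).filter (· < j) = Finset.range j := by
        ext i
        simp only [Finset.mem_filter, Finset.mem_range]
        omega
      rw [h1, h2, h3]
    have hsumW : ∀ ω, (∑ i, W ω i) = Δ ω := by
      intro ω
      rw [hWdef, hΔdef]
      exact Finset.sum_coe_sort (Finset.Ico k N) (fun n => Y n ω)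
    set MA : Set ({i // i ∈ Finset.range k} → ℝ) :=
      {v | a ≤ ∑ i, v i} ∩
        ⋂ j ∈ Finset.range k,
          {v | (∑ i : {i // i ∈ Finset.range k}, if (i : ℕ) < j then v i else 0) < a}
      with hMAdef
    have hsummeas : Measurable fun v : ({i // i ∈ Finset.range k} → ℝ) =>
        ∑ i, v i :=
      Finset.measurable_sum _ fun i _ => measurable_pi_apply i
    have hMAm : MeasurableSet MA := by
      refine (measurableSet_le measurable_const hsummeas).inter
        (MeasurableSet.biInter (Finset.range k).countable_toSet fun j _ =>
          measurableSet_lt ?_ measurable_const)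
      refine Finset.measurable_sum _ fun i _ => ?_
      by_cases h : (i : ℕ) < j
      · simpa [h] using measurable_pi_apply i
      · simpa [h] using measurable_const
    have hAV : A k = V ⁻¹' MA := by
      ext ω
      simp only [hAdef, hMAdef, Set.mem_setOf_eq, Set.mem_preimage, Set.mem_inter_iff,
        Set.mem_iInter, Finset.mem_range, hsum1]
      refine and_congr Iff.rfl ?_
      refine forall_congr' fun j => ?_
      constructor
      · intro h hj; rw [hsum2 j hj]; exact h hj
      · intro h hj; rw [← hsum2 j hj]; exact h hj
    have hW1 : {ω | Δ ω < 0} = W ⁻¹' {w | (∑ i, w i) < 0} := by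
      ext ω; simp only [Set.mem_setOf_eq, Set.mem_preimage, hsumW]
    have hW2 : {ω | 0 ≤ Δ ω} = W ⁻¹' {w | 0 ≤ ∑ i, w i} := by
      ext ω; simp only [Set.mem_setOf_eq, Set.mem_preimage, hsumW]
    have hsummeasW : Measurable fun w : ({i // i ∈ Finset.Ico k N} → ℝ) =>
        ∑ i, w i :=
      Finset.measurable_sum _ fun i _ => measurable_pi_apply i
    have hmul1 : P (A k ∩ {ω | Δ ω < 0}) = P (A k) * P {ω | Δ ω < 0} := by
      rw [hAV, hW1]
      exact hind2.measure_inter_preimage_eq_mul _ _ hMAm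
        (measurableSet_lt hsummeasW measurable_const)
    have hmul2 : P (A k ∩ {ω | 0 ≤ Δ ω}) = P (A k) * P {ω | 0 ≤ Δ ω} := by
      rw [hAV, hW2]
      exact hind2.measure_inter_preimage_eq_mul _ _ hMAm
        (measurableSet_le measurable_const hsummeasW)
    have hsplit : P (A k) = P (A k ∩ {ω | Δ ω < 0}) + P (A k ∩ {ω | 0 ≤ Δ ω}) := by
      have hm : MeasurableSet {ω | Δ ω < 0} := measurableSet_lt hΔm measurable_const
      have hd : A k \ {ω | Δ ω < 0} = A k ∩ {ω | 0 ≤ Δ ω} := by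
        ext ω
        simp only [Set.mem_diff, Set.mem_inter_iff, Set.mem_setOf_eq, not_lt]
      rw [← measure_inter_add_diff (A k) hm, hd]
    have hkey2 : P (A k) ≤ 2 * P (A k ∩ {ω | 0 ≤ Δ ω}) := by
      have h1 : P (A k ∩ {ω | Δ ω < 0}) ≤ P (A k ∩ {ω | 0 ≤ Δ ω}) := by
        rw [hmul1, hmul2]
        exact mul_le_mul_right (hsym k hkN) _
      calc P (A k) = P (A k ∩ {ω | Δ ω < 0}) + P (A k ∩ {ω | 0 ≤ Δ ω}) := hsplit
        _ ≤ P (A k ∩ {ω | 0 ≤ Δ ω}) + P (A k ∩ {ω | 0 ≤ Δ ω}) := add_le_add_left h1 _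
        _ = 2 * P (A k ∩ {ω | 0 ≤ Δ ω}) := (two_mul _).symm
    refine hkey2.trans (mul_le_mul_right (measure_mono fun ω hω => ?_) _)
    refine ⟨hω.1, ?_⟩
    have h1 : a ≤ S k ω := hω.1.1
    have h2 : 0 ≤ Δ ω := hω.2
    simp only [hFdef, Set.mem_setOf_eq, hSN ω]
    linarith
  calc P {ω | ∃ k ≤ N, a ≤ S k ω} ≤ P (⋃ k ∈ Finset.range (N + 1), A k) :=
        measure_mono hcover
    _ = ∑ k ∈ Finset.range (N + 1), P (A k) :=
        measure_biUnion_finset hdisj fun k _ => hAm k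
    _ ≤ ∑ k ∈ Finset.range (N + 1), 2 * P (A k ∩ F) := by
        refine Finset.sum_le_sum fun k hk => key k ?_
        simpa [Nat.lt_succ_iff] using hk
    _ = 2 * ∑ k ∈ Finset.range (N + 1), P (A k ∩ F) := by rw [Finset.mul_sum]
    _ = 2 * P (⋃ k ∈ Finset.range (N + 1), A k ∩ F) := by
        have hdisjF : (↑(Finset.range (N + 1)) : Set ℕ).PairwiseDisjoint
            (fun k => A k ∩ F) := fun k hk l hl hkl =>
          (hdisj hk hl hkl).mono Set.inter_subset_left Set.inter_subset_left
        rw [measure_biUnion_finset hdisjF fun k _ => (hAm k).inter hFm]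
    _ ≤ 2 * P F := by
        refine mul_le_mul_right (measure_mono ?_) _
        exact Set.iUnion₂_subset fun k _ => Set.inter_subset_right

/-- Reflection bound along a dyadic grid. -/
private lemma bm_grid (P : Measure Ω) [IsProbabilityMeasure P]
    {B : ℝ → Ω → ℝ} (hB : IsStandardBrownianMotion P B)
    {T : ℝ} (hT : 0 < T) {a' : ℝ} (ha' : 0 < a') (n : ℕ) :
    P {ω | ∃ j : ℕ, j ≤ 2 ^ n ∧ a' ≤ B ((j : ℝ) * (T / 2 ^ n)) ω}
      ≤ 2 * gaussianReal 0 T.toNNReal {x | a' ≤ x} := by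
  obtain ⟨h0, hcont, hlaw, hinc⟩ := hB
  set N : ℕ := 2 ^ n with hNdef
  set δ : ℝ := T / 2 ^ n with hδdef
  have hδpos : 0 < δ := by positivity
  set t : ℕ → ℝ := fun j => (min j N : ℕ) * δ with htdef
  have htm : Monotone t := by
    intro i j hij
    exact mul_le_mul_of_nonneg_right (Nat.cast_le.2 (min_le_min_right N hij)) hδpos.le
  have ht0 : t 0 = 0 := by simp [htdef]
  have htnn : ∀ j, 0 ≤ t j := fun j => ht0 ▸ htm (Nat.zero_le j)
  have htN : t N = T := by
    rw [htdef]
    simp only [min_self, hδdef, hNdef]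
    push_cast
    field_simp
  have htj : ∀ j, j ≤ N → t j = (j : ℝ) * δ := by
    intro j hj
    show ((min j N : ℕ) : ℝ) * δ = (j : ℝ) * δ
    rw [min_eq_left hj]
  set X : ℕ → Ω → ℝ := fun j ω => B (t (j + 1)) ω - B (t j) ω with hXdef
  have hXlaw : ∀ j, P.map (X j) = gaussianReal 0 (t (j + 1) - t j).toNNReal := fun j =>
    hlaw _ _ (htnn j) (htm (Nat.le_succ j))
  have hXae : ∀ j, AEMeasurable (X j) P := fun j => aemeasurable_of_map_gaussian (hXlaw j)
  have hind : iIndepFun X P := hinc t htm (le_of_eq ht0.symm)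
  set Y : ℕ → Ω → ℝ := fun j => (hXae j).mk (X j) with hYdef
  have hYm : ∀ j, Measurable (Y j) := fun j => (hXae j).measurable_mk
  have hXY : ∀ j, X j =ᵐ[P] Y j := fun j => (hXae j).ae_eq_mk
  have hindY : iIndepFun Y P := iIndepFun_congr_ae hind hXY
  -- identify partial sums with `B (t j)` a.e.
  have haeXY : ∀ᵐ ω ∂P, ∀ i, X i ω = Y i ω := ae_all_iff.2 hXY
  have hae : ∀ᵐ ω ∂P, ∀ j, (∑ i ∈ Finset.range j, Y i ω) = B (t j) ω := by
    filter_upwards [h0, haeXY] with ω h0ω hXYω j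
    have h1 : ∑ i ∈ Finset.range j, Y i ω = ∑ i ∈ Finset.range j, X i ω :=
      Finset.sum_congr rfl fun i _ => (hXYω i).symm
    rw [h1, hXdef]
    rw [Finset.sum_range_sub (fun i => B (t i) ω), ht0, h0ω, sub_zero]
  -- symmetric increments hypothesis of the discrete reflection lemma
  have hsym : ∀ k : ℕ, k ≤ N →
      P {ω | (∑ j ∈ Finset.Ico k N, Y j ω) < 0}
        ≤ P {ω | 0 ≤ ∑ j ∈ Finset.Ico k N, Y j ω} := by
    intro k hk
    set Z : Ω → ℝ := fun ω => B (t N) ω - B (t k) ω with hZdef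
    have hZlaw : P.map Z = gaussianReal 0 (t N - t k).toNNReal := hlaw _ _ (htnn k) (htm hk)
    have hZae : AEMeasurable Z P := aemeasurable_of_map_gaussian hZlaw
    have hΔZ : ∀ᵐ ω ∂P, (∑ j ∈ Finset.Ico k N, Y j ω) = Z ω := by
      filter_upwards [haeXY] with ω hXYω
      have h1 : ∑ j ∈ Finset.Ico k N, Y j ω = ∑ j ∈ Finset.Ico k N, X j ω :=
        Finset.sum_congr rfl fun i _ => (hXYω i).symm
      rw [h1, hXdef, Finset.sum_Ico_eq_sub _ hk,
        Finset.sum_range_sub (fun i => B (t i) ω), Finset.sum_range_sub (fun i => B (t i) ω)]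
      simp [hZdef]
    have he1 : ({ω | (∑ j ∈ Finset.Ico k N, Y j ω) < 0} : Set Ω) =ᵐ[P] {ω | Z ω < 0} := by
      filter_upwards [hΔZ] with ω hω
      show ((∑ j ∈ Finset.Ico k N, Y j ω) < 0) = (Z ω < 0)
      rw [hω]
    have he2 : ({ω | 0 ≤ ∑ j ∈ Finset.Ico k N, Y j ω} : Set Ω) =ᵐ[P] {ω | 0 ≤ Z ω} := by
      filter_upwards [hΔZ] with ω hω
      show (0 ≤ (∑ j ∈ Finset.Ico k N, Y j ω)) = (0 ≤ Z ω)
      rw [hω]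
    rw [measure_congr he1, measure_congr he2]
    have hm1 : P {ω | Z ω < 0} = gaussianReal 0 (t N - t k).toNNReal {x | x < 0} := by
      rw [← hZlaw, Measure.map_apply_of_aemeasurable hZae
        (measurableSet_lt measurable_id measurable_const : MeasurableSet {x : ℝ | x < 0})]
      rfl
    have hm2 : P {ω | 0 ≤ Z ω} = gaussianReal 0 (t N - t k).toNNReal {x | 0 ≤ x} := by
      rw [← hZlaw, Measure.map_apply_of_aemeasurable hZae
        (measurableSet_le measurable_const measurable_id : MeasurableSet {x : ℝ | 0 ≤ x})]
      rfl
    rw [hm1, hm2]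
    exact gaussian_Iio_le_Ici _
  have hrefl := discrete_reflection P hYm hindY N hsym ha'
  -- identify the events
  have he3 : ({ω | ∃ j : ℕ, j ≤ N ∧ a' ≤ B ((j : ℝ) * δ) ω} : Set Ω)
      =ᵐ[P] {ω | ∃ j ≤ N, a' ≤ ∑ i ∈ Finset.range j, Y i ω} := by
    filter_upwards [hae] with ω hω
    show (∃ j : ℕ, j ≤ N ∧ a' ≤ B ((j : ℝ) * δ) ω) = (∃ j ≤ N, a' ≤ ∑ i ∈ Finset.range j, Y i ω)
    rw [eq_iff_iff]
    constructor
    · rintro ⟨j, hj, h⟩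
      exact ⟨j, hj, by rw [hω j, htj j hj]; exact h⟩
    · rintro ⟨j, hj, h⟩
      refine ⟨j, hj, ?_⟩
      rw [← htj j hj, ← hω j]
      exact h
  have he4 : ({ω | a' ≤ ∑ i ∈ Finset.range N, Y i ω} : Set Ω) =ᵐ[P] {ω | a' ≤ B T ω - B 0 ω} := by
    filter_upwards [hae, h0] with ω hω h0ω
    show (a' ≤ ∑ i ∈ Finset.range N, Y i ω) = (a' ≤ B T ω - B 0 ω)
    rw [hω N, htN, h0ω, sub_zero]
  have hend : P {ω | a' ≤ ∑ i ∈ Finset.range N, Y i ω}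
      = gaussianReal 0 T.toNNReal {x | a' ≤ x} := by
    rw [measure_congr he4]
    have hlawT := hlaw 0 T le_rfl hT.le
    have hTae : AEMeasurable (fun ω => B T ω - B 0 ω) P := aemeasurable_of_map_gaussian hlawT
    rw [show ({ω | a' ≤ B T ω - B 0 ω} : Set Ω)
        = (fun ω => B T ω - B 0 ω) ⁻¹' {x | a' ≤ x} from rfl,
      ← Measure.map_apply_of_aemeasurable hTae
        (measurableSet_le measurable_const measurable_id : MeasurableSet {x : ℝ | a' ≤ x}),
      hlawT, sub_zero]
  calc P {ω | ∃ j : ℕ, j ≤ 2 ^ n ∧ a' ≤ B ((j : ℝ) * (T / 2 ^ n)) ω}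
      = P {ω | ∃ j ≤ N, a' ≤ ∑ i ∈ Finset.range j, Y i ω} := measure_congr he3
    _ ≤ 2 * P {ω | a' ≤ ∑ i ∈ Finset.range N, Y i ω} := hrefl
    _ = 2 * gaussianReal 0 T.toNNReal {x | a' ≤ x} := by rw [hend]

/-- Reflection bound for the running maximum of Brownian motion over `[0, T]`. -/
private lemma bm_upper (P : Measure Ω) [IsProbabilityMeasure P]
    {B : ℝ → Ω → ℝ} (hB : IsStandardBrownianMotion P B)
    {T : ℝ} (hT : 0 < T) {a : ℝ} (ha : 0 < a) :
    P {ω | ∃ s ∈ Set.Icc (0 : ℝ) T, a ≤ B s ω}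
      ≤ 2 * gaussianReal 0 T.toNNReal {x | a ≤ x} := by
  have hcont := hB.2.1
  -- Step 1 : the bound at any level `a' ∈ (0, a)`
  have step : ∀ a' : ℝ, 0 < a' → a' < a →
      P {ω | ∃ s ∈ Set.Icc (0 : ℝ) T, a ≤ B s ω}
        ≤ 2 * gaussianReal 0 T.toNNReal {x | a' ≤ x} := by
    intro a' ha'0 ha'a
    set G : ℕ → Set Ω :=
      fun n => {ω | ∃ j : ℕ, j ≤ 2 ^ n ∧ a' ≤ B ((j : ℝ) * (T / 2 ^ n)) ω} with hGdef
    have hGmono : Monotone G := by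
      refine monotone_nat_of_le_succ fun n ω hω => ?_
      obtain ⟨j, hj, h⟩ := hω
      refine ⟨2 * j, by omega, ?_⟩
      have harg : ((2 * j : ℕ) : ℝ) * (T / 2 ^ (n + 1)) = (j : ℝ) * (T / 2 ^ n) := by
        push_cast
        rw [pow_succ]
        ring
      rw [harg]
      exact h
    have hcover : {ω | ∃ s ∈ Set.Icc (0 : ℝ) T, a ≤ B s ω} ⊆
        (⋃ n, G n) ∪ {ω | ¬ ContinuousOn (fun t => B t ω) (Set.Ici 0)} := by
      rintro ω ⟨s, ⟨hs0, hsT⟩, haB⟩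
      by_cases hc : ContinuousOn (fun t => B t ω) (Set.Ici 0)
      · left
        have hcw : ContinuousWithinAt (fun t => B t ω) (Set.Ici 0) s := hc s hs0
        have hev : ∀ᶠ u in nhdsWithin s (Set.Ici 0), a' < B u ω :=
          hcw.eventually (eventually_gt_nhds (lt_of_lt_of_le ha'a haB))
        rw [Filter.eventually_iff, Metric.mem_nhdsWithin_iff] at hev
        obtain ⟨d, hd0, hd⟩ := hev
        obtain ⟨n, hn⟩ := exists_pow_lt_of_lt_one (div_pos hd0 hT) (by norm_num : (1 : ℝ) / 2 < 1)
        have hstep : T / 2 ^ n < d := by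
          have h2 : ((1 : ℝ) / 2) ^ n = 1 / 2 ^ n := by
            rw [div_pow, one_pow]
          rw [h2] at hn
          calc T / 2 ^ n = T * (1 / 2 ^ n) := by ring
            _ < T * (d / T) := by
                exact mul_lt_mul_of_pos_left hn hT
            _ = d := by field_simp
        set c : ℝ := T / 2 ^ n with hcdef
        have hcpos : 0 < c := by positivity
        set j : ℕ := ⌊s / c⌋₊ with hjdef
        have hjle : (j : ℝ) * c ≤ s := by
          have h1 : (j : ℝ) ≤ s / c := Nat.floor_le (div_nonneg hs0 hcpos.le)
          calc (j : ℝ) * c ≤ (s / c) * c := mul_le_mul_of_nonneg_right h1 hcpos.le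
            _ = s := by field_simp
        have hslt : s < (j : ℝ) * c + c := by
          have h1 : s / c < (j : ℝ) + 1 := Nat.lt_floor_add_one (s / c)
          calc s = (s / c) * c := by field_simp
            _ < ((j : ℝ) + 1) * c := mul_lt_mul_of_pos_right h1 hcpos
            _ = (j : ℝ) * c + c := by ring
        have hjN : j ≤ 2 ^ n := by
          have h1 : s / c ≤ ((2 ^ n : ℕ) : ℝ) := by
            rw [div_le_iff₀ hcpos]
            push_cast
            calc s ≤ T := hsT
              _ = (2 : ℝ) ^ n * c := by
                  rw [hcdef]
                  field_simp
          calc j = ⌊s / c⌋₊ := hjdef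
            _ ≤ ⌊((2 ^ n : ℕ) : ℝ)⌋₊ := Nat.floor_mono h1
            _ = 2 ^ n := Nat.floor_natCast _
        refine Set.mem_iUnion.2 ⟨n, j, hjN, ?_⟩
        refine le_of_lt (hd ⟨?_, ?_⟩)
        · rw [Metric.mem_ball, Real.dist_eq, abs_sub_comm, abs_of_nonneg (by linarith)]
          linarith
        · exact mul_nonneg (Nat.cast_nonneg j) hcpos.le
      · right
        exact hc
    have hnull : P {ω | ¬ ContinuousOn (fun t => B t ω) (Set.Ici 0)} = 0 := by
      rw [← MeasureTheory.ae_iff] at *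
      exact hcont
    calc P {ω | ∃ s ∈ Set.Icc (0 : ℝ) T, a ≤ B s ω}
        ≤ P ((⋃ n, G n) ∪ {ω | ¬ ContinuousOn (fun t => B t ω) (Set.Ici 0)}) :=
          measure_mono hcover
      _ ≤ P (⋃ n, G n) + P {ω | ¬ ContinuousOn (fun t => B t ω) (Set.Ici 0)} :=
          measure_union_le _ _
      _ = P (⋃ n, G n) := by rw [hnull, add_zero]
      _ = ⨆ n, P (G n) := (hGmono.directed_le).measure_iUnion
      _ ≤ 2 * gaussianReal 0 T.toNNReal {x | a' ≤ x} :=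
          iSup_le fun n => bm_grid P hB hT ha'0 n
  -- Step 2 : pass to the limit `a' ↑ a`
  set q : ℕ → ℝ := fun m => a - a / (m + 2) with hqdef
  have hq0 : ∀ m, 0 < q m := by
    intro m
    have h1 : a / (m + 2) < a := by
      apply div_lt_self ha
      have : (0 : ℝ) ≤ (m : ℝ) := Nat.cast_nonneg m
      linarith
    simpa [hqdef] using sub_pos.2 h1
  have hqa : ∀ m, q m < a := fun m =>
    sub_lt_self a (div_pos ha (by positivity))
  have hqtend : Filter.Tendsto q Filter.atTop (nhds a) := by
    have h1 : Filter.Tendsto (fun m : ℕ => ((m : ℝ) + 2)) Filter.atTop Filter.atTop :=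
      Filter.tendsto_atTop_add_const_right _ 2 tendsto_natCast_atTop_atTop
    have h2 : Filter.Tendsto (fun m : ℕ => a / ((m : ℝ) + 2)) Filter.atTop (nhds 0) := by
      simp only [div_eq_mul_inv]
      rw [show (0 : ℝ) = a * 0 by ring]
      exact Filter.Tendsto.const_mul a h1.inv_tendsto_atTop
    have := Filter.Tendsto.sub (tendsto_const_nhds (x := a)) h2
    simpa using this
  have hqmono : Monotone q := by
    intro m m' hm
    have h1 : a / ((m' : ℝ) + 2) ≤ a / ((m : ℝ) + 2) := by
      apply div_le_div_of_nonneg_left ha.le (by positivity)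
      have := (Nat.cast_le (α := ℝ)).2 hm
      linarith
    simp only [hqdef]
    linarith
  have hInter : (⋂ m, {x : ℝ | q m ≤ x}) = {x | a ≤ x} := by
    ext x
    simp only [Set.mem_iInter, Set.mem_setOf_eq]
    constructor
    · intro h
      exact le_of_tendsto hqtend (Filter.Eventually.of_forall h)
    · intro h m
      exact (hqa m).le.trans h
  have hanti : Antitone fun m => {x : ℝ | q m ≤ x} := by
    intro m m' hm x hx
    exact (hqmono hm).trans hx
  have htendM : Filter.Tendsto (fun m => 2 * gaussianReal 0 T.toNNReal {x | q m ≤ x})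
      Filter.atTop (nhds (2 * gaussianReal 0 T.toNNReal {x | a ≤ x})) := by
    rw [← hInter]
    refine ENNReal.Tendsto.const_mul ?_ (Or.inr (by norm_num))
    exact tendsto_measure_iInter_atTop
      (fun m => (measurableSet_le measurable_const measurable_id).nullMeasurableSet)
      hanti ⟨0, measure_ne_top _ _⟩
  exact ge_of_tendsto' htendM fun m => step (q m) (hq0 m) (hqa m)

/-- The negative of a standard Brownian motion is a standard Brownian motion. -/
private lemma neg_bm {P : Measure Ω} {B : ℝ → Ω → ℝ} (hB : IsStandardBrownianMotion P B) :
    IsStandardBrownianMotion P (fun t ω => -B t ω) := by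
  obtain ⟨h0, hc, hlaw, hinc⟩ := hB
  refine ⟨?_, ?_, ?_, ?_⟩
  · filter_upwards [h0] with ω h
    simp [h]
  · filter_upwards [hc] with ω h
    exact h.neg
  · intro s t hs hst
    have hfun : (fun ω => -B t ω - -B s ω) = (fun x : ℝ => -x) ∘ (fun ω => B t ω - B s ω) := by
      funext ω
      simp only [Function.comp_apply]
      ring
    have hae : AEMeasurable (fun ω => B t ω - B s ω) P :=
      aemeasurable_of_map_gaussian (hlaw s t hs hst)
    rw [hfun, ← AEMeasurable.map_map_of_aemeasurable measurable_neg.aemeasurable hae,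
      hlaw s t hs hst, gaussian_map_neg]
  · intro t ht h0t
    have h2 := (hinc t ht h0t).comp (g := fun _ => (fun x : ℝ => -x))
      (fun _ => measurable_neg)
    convert h2 using 2 with n
    funext ω
    simp only [Function.comp_apply]
    ring

private lemma real_integral_mul_exp {b : ℝ} (hb : 0 < b) :
    ∫ x in Set.Ioi (0 : ℝ), x * rexp (-b * x ^ 2) = (2 * b)⁻¹ := by
  have hderiv : ∀ x : ℝ, HasDerivAt (fun y => -(2 * b)⁻¹ * rexp (-b * y ^ 2))
      (x * rexp (-b * x ^ 2)) x := by
    intro x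
    have h1 : HasDerivAt (fun y : ℝ => -b * y ^ 2) (-b * (2 * x)) x := by
      simpa using (hasDerivAt_pow 2 x).const_mul (-b)
    have h2 := (Real.hasDerivAt_exp (-b * x ^ 2)).comp x h1
    have h3 := h2.const_mul (-(2 * b)⁻¹)
    refine (h3.congr_deriv ?_)
    field_simp
  have htend : Filter.Tendsto (fun y : ℝ => -(2 * b)⁻¹ * rexp (-b * y ^ 2))
      Filter.atTop (nhds 0) := by
    have h1 : Filter.Tendsto (fun y : ℝ => b * y ^ 2) Filter.atTop Filter.atTop := by
      exact (tendsto_pow_atTop two_ne_zero).const_mul_atTop hb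
    have h2 : Filter.Tendsto (fun y : ℝ => -b * y ^ 2) Filter.atTop Filter.atBot := by
      have := Filter.tendsto_neg_atTop_atBot.comp h1
      refine this.congr fun y => ?_
      simp only [Function.comp_apply]
      ring
    have h3 := Real.tendsto_exp_atBot.comp h2
    have h4 := h3.const_mul (-(2 * b)⁻¹)
    simpa using h4
  have := MeasureTheory.integral_Ioi_of_hasDerivAt_of_tendsto
    (f := fun y => -(2 * b)⁻¹ * rexp (-b * y ^ 2)) (f' := fun x => x * rexp (-b * x ^ 2))
    (a := 0) ((hderiv 0).continuousAt.continuousWithinAt)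
    (fun x _ => hderiv x) (integrable_mul_exp_neg_mul_sq hb).integrableOn htend
  rw [this]
  norm_num

/-- Expected positive part of a centered Gaussian, expressed as a tail integral. -/
private lemma tail_integral {v : ℝ≥0} (hv : v ≠ 0) :
    ∫⁻ u in Set.Ioi (0 : ℝ), gaussianReal 0 v {x | u ≤ x}
      = ENNReal.ofReal ((Real.sqrt (2 * π * v))⁻¹ * v) := by
  set ν := gaussianReal 0 v with hν
  have hπ := Real.pi_pos
  have hvpos : (0 : ℝ) < v := by positivity
  have h1 : ∫⁻ u in Set.Ioi (0 : ℝ), ν {x | u ≤ x}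
      = ∫⁻ u in Set.Ioi (0 : ℝ), ν {x | u ≤ max x 0} := by
    refine setLIntegral_congr_fun measurableSet_Ioi (fun u hu => ?_)
    congr 1
    ext x
    simp only [Set.mem_setOf_eq, le_max_iff]
    constructor
    · intro h; exact Or.inl h
    · rintro (h | h)
      · exact h
      · exfalso; exact absurd (lt_of_lt_of_le hu h) (lt_irrefl 0)
  have h2 := MeasureTheory.lintegral_eq_lintegral_meas_le ν (f := fun x => max x 0)
    (Filter.Eventually.of_forall fun x => le_max_right x 0)
    ((measurable_id.max measurable_const).aemeasurable)
  rw [h1, ← h2, hν, gaussianReal_of_var_ne_zero _ hv,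
    lintegral_withDensity_eq_lintegral_mul _ (measurable_gaussianPDF _ _)
      (show Measurable (fun x : ℝ => ENNReal.ofReal (max x 0)) by fun_prop),
    ← lintegral_add_compl _ (measurableSet_Ioi (a := (0 : ℝ)))]
  have hc : ∫⁻ x in (Set.Ioi (0 : ℝ))ᶜ,
      (gaussianPDF 0 v * fun x => ENNReal.ofReal (max x 0)) x = 0 := by
    have hzero : ∀ x ∈ (Set.Ioi (0 : ℝ))ᶜ,
        (gaussianPDF 0 v * fun x => ENNReal.ofReal (max x 0)) x = (fun _ : ℝ => (0 : ℝ≥0∞)) x := by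
      intro x hx
      simp only [Set.mem_compl_iff, Set.mem_Ioi, not_lt] at hx
      simp only [Pi.mul_apply]
      rw [max_eq_right hx, ENNReal.ofReal_zero, mul_zero]
    rw [setLIntegral_congr_fun measurableSet_Ioi.compl hzero,
      lintegral_zero]
  rw [hc, add_zero]
  set b : ℝ := (2 * (v : ℝ))⁻¹ with hbdef
  have hbpos : 0 < b := by positivity
  have hpdf : ∀ x : ℝ, 0 < x → gaussianPDFReal 0 v x
      = (Real.sqrt (2 * π * v))⁻¹ * (rexp (-b * x ^ 2)) := by
    intro x hx
    rw [gaussianPDFReal]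
    congr 1
    congr 1
    rw [hbdef]
    field_simp
    ring
  have hmain : ∫⁻ x in Set.Ioi (0 : ℝ),
      (gaussianPDF 0 v * fun x => ENNReal.ofReal (max x 0)) x
      = ∫⁻ x in Set.Ioi (0 : ℝ),
          ENNReal.ofReal ((Real.sqrt (2 * π * v))⁻¹ * (x * rexp (-b * x ^ 2))) := by
    refine setLIntegral_congr_fun measurableSet_Ioi
      (fun x hx => ?_)
    simp only [Set.mem_Ioi] at hx
    simp only [Pi.mul_apply, gaussianPDF]
    rw [max_eq_left hx.le, ← ENNReal.ofReal_mul (gaussianPDFReal_nonneg _ _ _),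
      hpdf x hx]
    congr 1
    ring
  have hint : Integrable (fun x => (Real.sqrt (2 * π * v))⁻¹ * (x * rexp (-b * x ^ 2)))
      (MeasureTheory.volume.restrict (Set.Ioi (0 : ℝ))) := by
    refine Integrable.restrict ?_
    have := (integrable_mul_exp_neg_mul_sq hbpos).const_mul (Real.sqrt (2 * π * v))⁻¹
    simpa [mul_assoc] using this
  have hnn : 0 ≤ᵐ[MeasureTheory.volume.restrict (Set.Ioi (0 : ℝ))]
      fun x => (Real.sqrt (2 * π * v))⁻¹ * (x * rexp (-b * x ^ 2)) := by
    refine (MeasureTheory.ae_restrict_mem measurableSet_Ioi).mono fun x hx => ?_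
    simp only [Set.mem_Ioi] at hx
    have h1 : (0 : ℝ) ≤ (Real.sqrt (2 * π * v))⁻¹ := by positivity
    have h2 : (0 : ℝ) ≤ x * rexp (-b * x ^ 2) := by positivity
    exact mul_nonneg h1 h2
  rw [hmain, ← MeasureTheory.ofReal_integral_eq_lintegral_ofReal hint hnn]
  congr 1
  rw [MeasureTheory.integral_const_mul, real_integral_mul_exp hbpos]
  congr 1
  rw [hbdef]
  field_simp

end Auxiliary

/-- Integrated exit estimate (Lemma 4): for a standard Brownian motion `B` started at `0`,
`∫∫_{0 < x < y < 2π} P(∃ s ∈ [0, 2ε], (y − x) + B_s ∈ {0, 2π}) dx dy ≤ 8 √π √ε`. -/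
theorem integrated_exit_estimate
    {Ω : Type*} [MeasurableSpace Ω] (P : Measure Ω) [IsProbabilityMeasure P]
    (B : ℝ → Ω → ℝ) (hB : IsStandardBrownianMotion P B)
    (ε : ℝ) (hε : 0 < ε) :
    (∫⁻ x in Set.Ioo (0 : ℝ) (2 * π), ∫⁻ y in Set.Ioo x (2 * π),
        P {ω | ∃ s ∈ Set.Icc (0 : ℝ) (2 * ε), (y - x) + B s ω ∈ ({0, 2 * π} : Set ℝ)})
      ≤ ENNReal.ofReal (8 * Real.sqrt π * Real.sqrt ε) := by
  have hπ := Real.pi_pos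
  have hT : (0 : ℝ) < 2 * ε := by positivity
  set ν : Measure ℝ := gaussianReal 0 (2 * ε).toNNReal with hνdef
  have htail_anti : Antitone (fun u : ℝ => ν {x | u ≤ x}) := fun u u' h =>
    measure_mono fun x hx => le_trans h hx
  have htail_meas : Measurable (fun u : ℝ => ν {x | u ≤ x}) := htail_anti.measurable
  set g : ℝ → ENNReal := fun u => 2 * ν {x | u ≤ x} with hgdef
  have hgm : Measurable g := htail_meas.const_mul 2
  have hvne : (2 * ε).toNNReal ≠ 0 := by
    simp only [ne_eq, Real.toNNReal_eq_zero, not_le]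
    positivity
  have hC : ∫⁻ u in Set.Ioi (0 : ℝ), g u
      = 2 * ENNReal.ofReal
          ((Real.sqrt (2 * π * ((2 * ε).toNNReal : ℝ)))⁻¹ * ((2 * ε).toNNReal : ℝ)) := by
    rw [hgdef, lintegral_const_mul 2 htail_meas, tail_integral hvne]
  have hpoint : ∀ x ∈ Set.Ioo (0 : ℝ) (2 * π), ∀ y ∈ Set.Ioo x (2 * π),
      P {ω | ∃ s ∈ Set.Icc (0 : ℝ) (2 * ε), (y - x) + B s ω ∈ ({0, 2 * π} : Set ℝ)}
        ≤ g (y - x) + g (2 * π + x - y) := by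
    intro x hx y hy
    have hu1 : 0 < y - x := sub_pos.2 hy.1
    have hu2 : 0 < 2 * π + x - y := by
      have h1 := hy.2
      have h2 := hx.1
      linarith
    have hsub : {ω | ∃ s ∈ Set.Icc (0 : ℝ) (2 * ε), (y - x) + B s ω ∈ ({0, 2 * π} : Set ℝ)} ⊆
        {ω | ∃ s ∈ Set.Icc (0 : ℝ) (2 * ε), (y - x) ≤ -B s ω} ∪
          {ω | ∃ s ∈ Set.Icc (0 : ℝ) (2 * ε), (2 * π + x - y) ≤ B s ω} := by
      rintro ω ⟨s, hs, hmem⟩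
      simp only [Set.mem_insert_iff, Set.mem_singleton_iff] at hmem
      rcases hmem with h | h
      · exact Or.inl ⟨s, hs, by linarith⟩
      · exact Or.inr ⟨s, hs, by linarith⟩
    refine le_trans (measure_mono hsub) (le_trans (measure_union_le _ _) ?_)
    have hb1 : P {ω | ∃ s ∈ Set.Icc (0 : ℝ) (2 * ε), (y - x) ≤ -B s ω} ≤ g (y - x) :=
      bm_upper P (neg_bm hB) hT hu1
    have hb2 : P {ω | ∃ s ∈ Set.Icc (0 : ℝ) (2 * ε), (2 * π + x - y) ≤ B s ω}
        ≤ g (2 * π + x - y) := bm_upper P hB hT hu2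
    exact add_le_add hb1 hb2
  have hinner : ∀ x ∈ Set.Ioo (0 : ℝ) (2 * π),
      (∫⁻ y in Set.Ioo x (2 * π),
        P {ω | ∃ s ∈ Set.Icc (0 : ℝ) (2 * ε), (y - x) + B s ω ∈ ({0, 2 * π} : Set ℝ)})
        ≤ 2 * ∫⁻ u in Set.Ioi (0 : ℝ), g u := by
    intro x hx
    have hm1 : Measurable fun y : ℝ => g (y - x) := hgm.comp (measurable_id.sub_const x)
    have hm2 : Measurable fun y : ℝ => g (2 * π + x - y) :=
      hgm.comp (measurable_const.sub measurable_id)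
    have h1 : (∫⁻ y in Set.Ioo x (2 * π),
        P {ω | ∃ s ∈ Set.Icc (0 : ℝ) (2 * ε), (y - x) + B s ω ∈ ({0, 2 * π} : Set ℝ)})
        ≤ ∫⁻ y in Set.Ioo x (2 * π), (g (y - x) + g (2 * π + x - y)) :=
      setLIntegral_mono (hm1.add hm2) (fun y hy => hpoint x hx y hy)
    have h2 : (∫⁻ y in Set.Ioo x (2 * π), (g (y - x) + g (2 * π + x - y)))
        = (∫⁻ y in Set.Ioo x (2 * π), g (y - x))
          + ∫⁻ y in Set.Ioo x (2 * π), g (2 * π + x - y) :=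
      lintegral_add_left hm1 _
    have hb1 : (∫⁻ y in Set.Ioo x (2 * π), g (y - x)) ≤ ∫⁻ u in Set.Ioi (0 : ℝ), g u := by
      have hmp := (measurePreserving_sub_right (MeasureTheory.volume : Measure ℝ)
        x).setLIntegral_comp_preimage_emb
        (MeasurableEquiv.subRight x).measurableEmbedding g (Set.Ioi 0)
      have hpre : (fun y : ℝ => y - x) ⁻¹' (Set.Ioi 0) = Set.Ioi x := by
        ext z
        simp [Set.mem_preimage, Set.mem_Ioi, sub_pos]
      rw [hpre] at hmp
      rw [← hmp]
      exact lintegral_mono_set Set.Ioo_subset_Ioi_self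
    have hb2 : (∫⁻ y in Set.Ioo x (2 * π), g (2 * π + x - y))
        ≤ ∫⁻ u in Set.Ioi (0 : ℝ), g u := by
      have hmp := (Measure.measurePreserving_sub_left (MeasureTheory.volume : Measure ℝ)
        (2 * π + x)).setLIntegral_comp_preimage_emb
        (MeasurableEquiv.subLeft (2 * π + x)).measurableEmbedding g (Set.Ioi 0)
      have hpre : (fun y : ℝ => 2 * π + x - y) ⁻¹' (Set.Ioi 0) = Set.Iio (2 * π + x) := by
        ext z
        simp [Set.mem_preimage, Set.mem_Ioi, sub_pos]
      rw [hpre] at hmp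
      rw [← hmp]
      refine lintegral_mono_set fun z hz => ?_
      have h1 := hz.2
      have h2 := hx.1
      simp only [Set.mem_Iio]
      linarith
    calc (∫⁻ y in Set.Ioo x (2 * π),
        P {ω | ∃ s ∈ Set.Icc (0 : ℝ) (2 * ε), (y - x) + B s ω ∈ ({0, 2 * π} : Set ℝ)})
        ≤ ∫⁻ y in Set.Ioo x (2 * π), (g (y - x) + g (2 * π + x - y)) := h1
      _ = (∫⁻ y in Set.Ioo x (2 * π), g (y - x))
          + ∫⁻ y in Set.Ioo x (2 * π), g (2 * π + x - y) := h2
      _ ≤ (∫⁻ u in Set.Ioi (0 : ℝ), g u) + ∫⁻ u in Set.Ioi (0 : ℝ), g u := add_le_add hb1 hb2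
      _ = 2 * ∫⁻ u in Set.Ioi (0 : ℝ), g u := (two_mul _).symm
  have houter : (∫⁻ x in Set.Ioo (0 : ℝ) (2 * π), ∫⁻ y in Set.Ioo x (2 * π),
      P {ω | ∃ s ∈ Set.Icc (0 : ℝ) (2 * ε), (y - x) + B s ω ∈ ({0, 2 * π} : Set ℝ)})
      ≤ (2 * ∫⁻ u in Set.Ioi (0 : ℝ), g u) * MeasureTheory.volume (Set.Ioo (0 : ℝ) (2 * π)) := by
    refine le_trans (setLIntegral_mono measurable_const hinner) ?_
    rw [setLIntegral_const]
  refine le_trans houter ?_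
  rw [hC, Real.volume_Ioo]
  have hV : ((2 * ε).toNNReal : ℝ) = 2 * ε := Real.coe_toNNReal _ (by positivity)
  rw [hV]
  have hsp : (0 : ℝ) < Real.sqrt π := Real.sqrt_pos.2 hπ
  have hse : (0 : ℝ) < Real.sqrt ε := Real.sqrt_pos.2 hε
  have hππ : Real.sqrt π * Real.sqrt π = π := Real.mul_self_sqrt hπ.le
  have hεε : Real.sqrt ε * Real.sqrt ε = ε := Real.mul_self_sqrt hε.le
  have hs : Real.sqrt (2 * π * (2 * ε)) = 2 * (Real.sqrt π * Real.sqrt ε) := by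
    rw [show 2 * π * (2 * ε) = (2 * (Real.sqrt π * Real.sqrt ε)) ^ 2 by
      rw [mul_pow, mul_pow, Real.sq_sqrt hπ.le, Real.sq_sqrt hε.le]
      ring]
    exact Real.sqrt_sq (by positivity)
  set c : ℝ := (Real.sqrt (2 * π * (2 * ε)))⁻¹ * (2 * ε) with hcdef
  have hcnn : 0 ≤ c := by positivity
  have harith : (2 : ENNReal) * (2 * ENNReal.ofReal c) * ENNReal.ofReal (2 * π - 0)
      = ENNReal.ofReal (2 * (2 * c) * (2 * π - 0)) := by
    rw [show (2 : ENNReal) = ENNReal.ofReal (2 : ℝ) by simp]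
    rw [← ENNReal.ofReal_mul (by norm_num), ← ENNReal.ofReal_mul (by norm_num),
      ← ENNReal.ofReal_mul (by positivity)]
  rw [harith]
  refine ENNReal.ofReal_le_ofReal ?_
  rw [hcdef, hs, sub_zero]
  have hgoal : 2 * (2 * ((2 * (Real.sqrt π * Real.sqrt ε))⁻¹ * (2 * ε))) * (2 * π)
      = 8 * Real.sqrt π * Real.sqrt ε := by
    have h1 : (2 * (Real.sqrt π * Real.sqrt ε)) ≠ 0 := by positivity
    field_simp
    linear_combination (-8 * ε) * hππ - (8 * Real.sqrt π ^ 2) * hεε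
  exact le_of_eq hgoal
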